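/- Assume ignorability. Let H : ℝ^p → ℝ^{d×d} be any bounded measurable matrix-valued function and let π be any policy. Then E[(f₀(X) + H(X) Z (C − Zᵀ f₀(X)))ᵀ π(X)] = E[f₀(X)ᵀ π(X)]. -/
import Mathlib


open MeasureTheory Matrix Finset

private lemma abs_dot_le {d : ℕ} (v w : Fin d → ℝ) {a b : ℝ}
    (hv : ∀ i, |v i| ≤ a) (hw : ∀ i, |w i| ≤ b) (ha : 0 ≤ a) :
    |v ⬝ᵥ w| ≤ d * (a * b) := by
  calc |∑ i, v i * w i| ≤ ∑ i, |v i * w i| := Finset.abs_sum_le_sum_abs _ _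
    _ ≤ ∑ _i : Fin d, a * b := Finset.sum_le_sum fun i _ => by
        rw [abs_mul]
        exact mul_le_mul (hv i) (hw i) (abs_nonneg _) ha
    _ = d * (a * b) := by simp [Finset.sum_const, mul_comm]

private lemma intg_bdd {Ω : Type*} [MeasurableSpace Ω] (μ : Measure Ω) [IsFiniteMeasure μ]
    {f : Ω → ℝ} (hf : Measurable f) {M : ℝ} (hb : ∀ ω, |f ω| ≤ M) : Integrable f μ :=
  ⟨hf.aestronglyMeasurable, HasFiniteIntegral.of_bounded (C := M)
    (Filter.Eventually.of_forall fun ω => by simpa using hb ω)⟩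

private lemma cond_zero {Ω : Type*} {m m0 : MeasurableSpace Ω} (hm : m ≤ m0)
    (μ : @MeasureTheory.Measure Ω m0) [IsProbabilityMeasure μ] {g C h : Ω → ℝ}
    (hg : StronglyMeasurable[m] g) (igC : Integrable (fun ω => g ω * C ω) μ)
    (iC : Integrable C μ) (hh : h =ᵐ[μ] μ[C|m]) :
    ∫ ω, g ω * C ω ∂μ = ∫ ω, g ω * h ω ∂μ := by
  haveI : SigmaFinite (μ.trim hm) := inferInstance
  have hpull : μ[(fun ω => g ω * C ω)|m] =ᵐ[μ] fun ω => g ω * (μ[C|m]) ω := by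
    have := condExp_mul_of_stronglyMeasurable_left (μ := μ) hg (by simpa [Pi.mul_def] using igC) iC
    simpa [Pi.mul_def] using this
  calc ∫ ω, g ω * C ω ∂μ = ∫ ω, (μ[(fun ω => g ω * C ω)|m]) ω ∂μ :=
        (integral_condExp hm).symm
    _ = ∫ ω, g ω * (μ[C|m]) ω ∂μ := integral_congr_ae hpull
    _ = ∫ ω, g ω * h ω ∂μ := integral_congr_ae (by
        filter_upwards [hh] with ω hω; rw [hω])

set_option maxHeartbeats 1000000 in
/-- Proposition 1 (doubly robust identification, correct outcome-model half): under
ignorability, for any bounded measurable matrix-valued weighting `H` and any policy `π`,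
`E[(f₀(X) + H(X) Z (C - Zᵀ f₀(X)))ᵀ π(X)] = E[f₀(X)ᵀ π(X)]`. -/
theorem stmt11 {Ω : Type*} [MeasurableSpace Ω] (μ : Measure Ω) [IsProbabilityMeasure μ]
    {p d : ℕ} (X : Ω → Fin p → ℝ) (Z Y : Ω → Fin d → ℝ)
    (hX : Measurable X) (hZ : Measurable Z) (hY : Measurable Y)
    (hZb : ∃ M, ∀ ω, ‖Z ω‖ ≤ M) (hYb : ∃ M, ∀ ω, ‖Y ω‖ ≤ M)
    (C : Ω → ℝ) (hC : ∀ ω, C ω = Z ω ⬝ᵥ Y ω)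
    (f₀ : (Fin p → ℝ) → Fin d → ℝ) (hf₀ : Measurable f₀) (hf₀b : ∃ M, ∀ x, ‖f₀ x‖ ≤ M)
    (hf₀ce : ∀ j, (fun ω => f₀ (X ω) j) =ᵐ[μ]
      μ[(fun ω => Y ω j) | MeasurableSpace.comap X inferInstance])
    (hIgn : (fun ω => Z ω ⬝ᵥ f₀ (X ω)) =ᵐ[μ]
      μ[C | MeasurableSpace.comap (fun ω => (X ω, Z ω)) inferInstance])
    (H : (Fin p → ℝ) → Matrix (Fin d) (Fin d) ℝ)
    (hH : ∀ i j, Measurable fun x => H x i j)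
    (hHb : ∃ M, ∀ x i j, |H x i j| ≤ M)
    (π : (Fin p → ℝ) → Fin d → ℝ) (hπ : Measurable π) (hπb : ∃ M, ∀ x, ‖π x‖ ≤ M) :
    ∫ ω, (f₀ (X ω) + (H (X ω)).mulVec ((C ω - Z ω ⬝ᵥ f₀ (X ω)) • Z ω)) ⬝ᵥ π (X ω) ∂μ =
      ∫ ω, f₀ (X ω) ⬝ᵥ π (X ω) ∂μ := by
  classical
  obtain ⟨MZ, hMZ⟩ := hZb
  obtain ⟨MY, hMY⟩ := hYb
  obtain ⟨Mf, hMf⟩ := hf₀b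
  obtain ⟨MH, hMH⟩ := hHb
  obtain ⟨Mπ, hMπ⟩ := hπb
  set BZ := max MZ 0 with hBZ
  set BY := max MY 0 with hBY
  set Bf := max Mf 0 with hBf
  set BH := max MH 0 with hBH
  set Bπ := max Mπ 0 with hBπ
  have hZi : ∀ ω i, |Z ω i| ≤ BZ := fun ω i =>
    le_trans (by simpa [Real.norm_eq_abs] using norm_le_pi_norm (Z ω) i)
      ((hMZ ω).trans (le_max_left _ _))
  have hYi : ∀ ω i, |Y ω i| ≤ BY := fun ω i =>
    le_trans (by simpa [Real.norm_eq_abs] using norm_le_pi_norm (Y ω) i)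
      ((hMY ω).trans (le_max_left _ _))
  have hfi : ∀ x i, |f₀ x i| ≤ Bf := fun x i =>
    le_trans (by simpa [Real.norm_eq_abs] using norm_le_pi_norm (f₀ x) i)
      ((hMf x).trans (le_max_left _ _))
  have hπi : ∀ x i, |π x i| ≤ Bπ := fun x i =>
    le_trans (by simpa [Real.norm_eq_abs] using norm_le_pi_norm (π x) i)
      ((hMπ x).trans (le_max_left _ _))
  have hHij : ∀ x i j, |H x i j| ≤ BH := fun x i j => (hMH x i j).trans (le_max_left _ _)
  have hBZ0 : (0:ℝ) ≤ BZ := le_max_right _ _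
  have hBf0 : (0:ℝ) ≤ Bf := le_max_right _ _
  have hBH0 : (0:ℝ) ≤ BH := le_max_right _ _
  -- the relevant scalar functions
  set s : Ω → ℝ := fun ω => C ω - Z ω ⬝ᵥ f₀ (X ω) with hs
  set g : Ω → ℝ := fun ω => (H (X ω)).mulVec (Z ω) ⬝ᵥ π (X ω) with hg
  set q : Ω → ℝ := fun ω => f₀ (X ω) ⬝ᵥ π (X ω) with hq
  -- component measurability
  have mZ : ∀ i, Measurable fun ω => Z ω i := fun i => (measurable_pi_apply i).comp hZ
  have mY : ∀ i, Measurable fun ω => Y ω i := fun i => (measurable_pi_apply i).comp hY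
  have mf : ∀ i, Measurable fun ω => f₀ (X ω) i :=
    fun i => ((measurable_pi_apply i).comp hf₀).comp hX
  have mπ : ∀ i, Measurable fun ω => π (X ω) i :=
    fun i => ((measurable_pi_apply i).comp hπ).comp hX
  have mH : ∀ i j, Measurable fun ω => H (X ω) i j := fun i j => (hH i j).comp hX
  have mq : Measurable q := by
    simp only [hq, dotProduct]
    exact Finset.measurable_sum _ fun j _ => (mf j).mul (mπ j)
  have mC : Measurable C := by
    have : C = fun ω => ∑ i, Z ω i * Y ω i := funext fun ω => by rw [hC ω]; rfl
    rw [this]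
    exact Finset.measurable_sum _ fun j _ => (mZ j).mul (mY j)
  have mZf : Measurable fun ω => Z ω ⬝ᵥ f₀ (X ω) := by
    simp only [dotProduct]
    exact Finset.measurable_sum _ fun j _ => (mZ j).mul (mf j)
  have ms : Measurable s := mC.sub mZf
  have mg : Measurable g := by
    simp only [hg, Matrix.mulVec, dotProduct]
    exact Finset.measurable_sum _ fun j _ =>
      (Finset.measurable_sum _ fun k _ => (mH j k).mul (mZ k)).mul (mπ j)
  -- bounds
  have bC : ∀ ω, |C ω| ≤ d * (BZ * BY) := fun ω => by
    rw [hC ω]; exact abs_dot_le _ _ (hZi ω) (hYi ω) hBZ0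
  have bZf : ∀ ω, |Z ω ⬝ᵥ f₀ (X ω)| ≤ d * (BZ * Bf) := fun ω =>
    abs_dot_le _ _ (hZi ω) (fun i => hfi _ i) hBZ0
  have bs : ∀ ω, |s ω| ≤ d * (BZ * BY) + d * (BZ * Bf) := fun ω =>
    (abs_sub _ _).trans (add_le_add (bC ω) (bZf ω))
  have bmv : ∀ ω j, |(H (X ω)).mulVec (Z ω) j| ≤ d * (BH * BZ) := fun ω j =>
    abs_dot_le _ _ (fun k => hHij _ j k) (hZi ω) hBH0
  have bg : ∀ ω, |g ω| ≤ d * ((d * (BH * BZ)) * Bπ) := fun ω =>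
    abs_dot_le _ _ (bmv ω) (fun i => hπi _ i) (by positivity)
  have bq : ∀ ω, |q ω| ≤ d * (Bf * Bπ) := fun ω =>
    abs_dot_le _ _ (fun i => hfi _ i) (fun i => hπi _ i) hBf0
  -- integrability
  have iq : Integrable q μ := intg_bdd μ mq bq
  have isg : Integrable (fun ω => s ω * g ω) μ :=
    intg_bdd μ (ms.mul mg) (M := (d * (BZ * BY) + d * (BZ * Bf)) * (d * ((d * (BH * BZ)) * Bπ)))
      (fun ω => by
        rw [abs_mul]
        exact mul_le_mul (bs ω) (bg ω) (abs_nonneg _)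
          (by positivity))
  have igC : Integrable (fun ω => g ω * C ω) μ :=
    intg_bdd μ (mg.mul mC) (M := (d * ((d * (BH * BZ)) * Bπ)) * (d * (BZ * BY)))
      (fun ω => by
        rw [abs_mul]
        exact mul_le_mul (bg ω) (bC ω) (abs_nonneg _) (by positivity))
  have iC : Integrable C μ := intg_bdd μ mC bC
  -- the conditioning σ-algebra
  have hm : MeasurableSpace.comap (fun ω => (X ω, Z ω)) inferInstance
      ≤ ‹MeasurableSpace Ω› := Measurable.comap_le (hX.prodMk hZ)
  -- g is m-measurable
  have hW : @Measurable Ω ((Fin p → ℝ) × (Fin d → ℝ))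
      (MeasurableSpace.comap (fun ω => (X ω, Z ω)) inferInstance) _ (fun ω => (X ω, Z ω)) :=
    fun t ht => ⟨t, ht, rfl⟩
  have hφ : Measurable (fun pr : (Fin p → ℝ) × (Fin d → ℝ) =>
      (H pr.1).mulVec pr.2 ⬝ᵥ π pr.1) := by
    simp only [Matrix.mulVec, dotProduct]
    exact Finset.measurable_sum _ fun j _ =>
      (Finset.measurable_sum _ fun k _ =>
        ((hH j k).comp measurable_fst).mul ((measurable_pi_apply k).comp measurable_snd)).mul
        (((measurable_pi_apply j).comp hπ).comp measurable_fst)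
  have hg_sm : StronglyMeasurable[MeasurableSpace.comap (fun ω => (X ω, Z ω)) inferInstance] g := by
    have h2 : g = (fun pr : (Fin p → ℝ) × (Fin d → ℝ) => (H pr.1).mulVec pr.2 ⬝ᵥ π pr.1)
        ∘ (fun ω => (X ω, Z ω)) := rfl
    rw [h2]
    exact (hφ.comp hW).stronglyMeasurable
  have igZf : Integrable (fun ω => g ω * (Z ω ⬝ᵥ f₀ (X ω))) μ := by
    refine intg_bdd μ (mg.mul mZf) (M := (d * ((d * (BH * BZ)) * Bπ)) * (d * (BZ * Bf)))
      (fun ω => ?_)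
    rw [abs_mul]
    exact mul_le_mul (bg ω) (bZf ω) (abs_nonneg _) (by positivity)
  -- key: ∫ s * g = 0
  have key : ∫ ω, s ω * g ω ∂μ = 0 := by
    have h1 : ∫ ω, g ω * C ω ∂μ = ∫ ω, g ω * (Z ω ⬝ᵥ f₀ (X ω)) ∂μ :=
      cond_zero hm μ hg_sm igC iC hIgn
    have h3 : ∀ ω, s ω * g ω = g ω * C ω - g ω * (Z ω ⬝ᵥ f₀ (X ω)) := fun ω => by
      simp only [hs]; ring
    simp only [h3]
    rw [integral_sub igC igZf, h1, sub_self]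
  -- final computation
  have hpt : ∀ ω, (f₀ (X ω) + (H (X ω)).mulVec ((C ω - Z ω ⬝ᵥ f₀ (X ω)) • Z ω)) ⬝ᵥ π (X ω)
      = q ω + s ω * g ω := fun ω => by
    rw [add_dotProduct, Matrix.mulVec_smul, smul_dotProduct, smul_eq_mul]
  simp only [hpt]
  rw [integral_add iq isg, key, add_zero]
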